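/- Let X be a complex Banach space, U a bounded invertible operator on X, A a bounded invertible operator on X, and γ ∈ ℂ with |γ| = 1 which is not a root of unity, such that U A U⁻¹ = γ A. Let w be a bounded operator on X commuting with A and set T = w U. Then the Weyl spectrum σ₄(T) is a rotation invariant subset of ℂ: if λ ∈ σ₄(T) and μ ∈ ℂ with |μ| = 1, then μλ ∈ σ₄(T). -/

import Mathlib

open Filter Topology

/-- A bounded operator is Weyl if it is Fredholm (closed range, finite dimensional kernel,
finite codimensional range) of index zero, i.e. `dim ker = codim ran`. -/
def IsWeylOp {X : Type*} [NormedAddCommGroup X] [NormedSpace ℂ X]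
    (S : X →L[ℂ] X) : Prop :=
  IsClosed (LinearMap.range (S : X →ₗ[ℂ] X) : Set X) ∧
    FiniteDimensional ℂ (LinearMap.ker (S : X →ₗ[ℂ] X)) ∧ FiniteDimensional ℂ (X ⧸ LinearMap.range (S : X →ₗ[ℂ] X)) ∧
    Module.finrank ℂ (LinearMap.ker (S : X →ₗ[ℂ] X)) = Module.finrank ℂ (X ⧸ LinearMap.range (S : X →ₗ[ℂ] X))

/-- The Weyl spectrum `σ₄(T)`. -/
def sigma4 {X : Type*} [NormedAddCommGroup X] [NormedSpace ℂ X]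
    (T : X →L[ℂ] X) : Set ℂ :=
  {l : ℂ | ¬ IsWeylOp (l • (1 : X →L[ℂ] X) - T)}

section Lemmas

open LinearMap (ker range)
open Module Submodule

variable {X : Type*} [NormedAddCommGroup X] [NormedSpace ℂ X] [CompleteSpace X]

lemma isWeylOp_comp_equiv (e f : X ≃L[ℂ] X) (S : X →L[ℂ] X) :
    IsWeylOp ((e : X →L[ℂ] X) * S * (f : X →L[ℂ] X)) ↔ IsWeylOp S := by
  set g : X →L[ℂ] X := (e : X →L[ℂ] X) * S * (f : X →L[ℂ] X) with hg
  have hker : ker (g : X →ₗ[ℂ] X) = (ker (S : X →ₗ[ℂ] X)).map (f.symm.toLinearEquiv : X →ₗ[ℂ] X) := by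
    ext x
    constructor
    · intro h
      have hx : S (f x) = 0 := by
        have := h
        simp only [hg, LinearMap.mem_ker, ContinuousLinearMap.coe_coe,
          ContinuousLinearMap.mul_apply] at this
        exact e.injective (by simpa using this)
      exact ⟨f x, hx, f.symm_apply_apply x⟩
    · rintro ⟨y, hy, rfl⟩
      have hy' : S y = 0 := hy
      show (e : X →L[ℂ] X) ((S : X →L[ℂ] X) ((f : X →L[ℂ] X) (f.symm y))) = 0
      rw [show (f : X →L[ℂ] X) (f.symm y) = y from f.apply_symm_apply y, hy', map_zero]
  have hran : range (g : X →ₗ[ℂ] X) = (range (S : X →ₗ[ℂ] X)).map (e : X →ₗ[ℂ] X) := by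
    ext y
    constructor
    · rintro ⟨x, rfl⟩
      exact ⟨S (f x), ⟨f x, rfl⟩, rfl⟩
    · rintro ⟨z, ⟨x, rfl⟩, rfl⟩
      exact ⟨f.symm x, by simp [hg, ContinuousLinearMap.mul_apply]⟩
  have eker : (ker (g : X →ₗ[ℂ] X)) ≃ₗ[ℂ] (ker (S : X →ₗ[ℂ] X)) := by
    rw [hker]
    exact (f.symm.toLinearEquiv.submoduleMap (ker (S : X →ₗ[ℂ] X))).symm
  have equot : (X ⧸ range (g : X →ₗ[ℂ] X)) ≃ₗ[ℂ] (X ⧸ range (S : X →ₗ[ℂ] X)) :=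
    (Submodule.Quotient.equiv (range (S : X →ₗ[ℂ] X)) (range (g : X →ₗ[ℂ] X)) e.toLinearEquiv hran.symm).symm
  have hcl : IsClosed (LinearMap.range (g : X →ₗ[ℂ] X) : Set X) ↔ IsClosed (LinearMap.range (S : X →ₗ[ℂ] X) : Set X) := by
    rw [hran]
    have : ((range (S : X →ₗ[ℂ] X)).map (e : X →ₗ[ℂ] X) : Set X) = e '' (range (S : X →ₗ[ℂ] X) : Set X) := rfl
    rw [this]
    exact e.toHomeomorph.isClosed_image
  constructor
  · rintro ⟨h1, h2, h3, h4⟩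
    haveI := h2; haveI := h3
    refine ⟨hcl.mp h1, eker.finiteDimensional, equot.finiteDimensional, ?_⟩
    rw [← eker.finrank_eq, ← equot.finrank_eq]; exact h4
  · rintro ⟨h1, h2, h3, h4⟩
    haveI := h2; haveI := h3
    refine ⟨hcl.mpr h1, eker.symm.finiteDimensional, equot.symm.finiteDimensional, ?_⟩
    rw [eker.finrank_eq, equot.finrank_eq]; exact h4

lemma isWeylOp_unit_mul {R : X →L[ℂ] X} (hR : IsUnit R) (S : X →L[ℂ] X) :
    IsWeylOp (R * S) ↔ IsWeylOp S := by
  obtain ⟨u, rfl⟩ := hR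
  have := isWeylOp_comp_equiv (ContinuousLinearEquiv.ofUnit u) (ContinuousLinearEquiv.refl ℂ X) S
  have h' : ((ContinuousLinearEquiv.ofUnit u : X ≃L[ℂ] X) : X →L[ℂ] X) = u := rfl
  simpa [h', ← ContinuousLinearMap.one_def] using this

lemma isWeylOp_mul_unit {R : X →L[ℂ] X} (hR : IsUnit R) (S : X →L[ℂ] X) :
    IsWeylOp (S * R) ↔ IsWeylOp S := by
  obtain ⟨u, rfl⟩ := hR
  have := isWeylOp_comp_equiv (ContinuousLinearEquiv.refl ℂ X) (ContinuousLinearEquiv.ofUnit u) S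
  have h' : ((ContinuousLinearEquiv.ofUnit u : X ≃L[ℂ] X) : X →L[ℂ] X) = u := rfl
  simpa [h', ← ContinuousLinearMap.one_def] using this

lemma isUnit_smul_one {c : ℂ} (hc : c ≠ 0) : IsUnit (c • (1 : X →L[ℂ] X)) :=
  ⟨⟨c • 1, c⁻¹ • 1, by ext x; simp [smul_smul, mul_inv_cancel₀ hc, inv_mul_cancel₀ hc],
    by ext x; simp [smul_smul, mul_inv_cancel₀ hc, inv_mul_cancel₀ hc]⟩, rfl⟩

lemma isWeylOp_smul {c : ℂ} (hc : c ≠ 0) (S : X →L[ℂ] X) :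
    IsWeylOp (c • S) ↔ IsWeylOp S := by
  have : c • S = (c • (1 : X →L[ℂ] X)) * S := by rw [smul_mul_assoc, one_mul]
  rw [this]
  exact isWeylOp_unit_mul (isUnit_smul_one hc) S

lemma exists_isCompl_le {p q : Submodule ℂ X} (h : p ⊔ q = ⊤) :
    ∃ q' : Submodule ℂ X, q' ≤ q ∧ IsCompl p q' := by
  obtain ⟨c, hc⟩ := Submodule.exists_isCompl ((p ⊓ q).comap q.subtype)
  refine ⟨c.map q.subtype, Submodule.map_subtype_le q c, ?_, ?_⟩
  · rw [Submodule.disjoint_def]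
    rintro x hxp ⟨y, hyc, rfl⟩
    have hy : y ∈ (p ⊓ q).comap q.subtype := by
      simp only [Submodule.mem_comap, Submodule.mem_inf]
      exact ⟨hxp, y.2⟩
    have := hc.disjoint.le_bot ⟨hy, hyc⟩
    simpa using congrArg (q.subtype) this
  · rw [codisjoint_iff]
    have h1 : (p ⊓ q) ⊔ c.map q.subtype = q := by
      have := congrArg (Submodule.map q.subtype) (codisjoint_iff.mp hc.codisjoint)
      rwa [Submodule.map_sup, Submodule.map_comap_subtype, Submodule.map_subtype_top,
        inf_of_le_right (inf_le_right : p ⊓ q ≤ q)] at this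
    calc p ⊔ c.map q.subtype = p ⊔ ((p ⊓ q) ⊔ c.map q.subtype) := by
          rw [← sup_assoc, sup_of_le_left (inf_le_left : p ⊓ q ≤ p)]
      _ = p ⊔ q := by rw [h1]
      _ = ⊤ := h


lemma isClosed_range_aux (S : X →L[ℂ] X) (M V' : Submodule ℂ X)
    (hMc : IsClosed (M : Set X)) (hV' : FiniteDimensional ℂ V')
    (hmap : (M.map (S : X →ₗ[ℂ] X)) = LinearMap.range (S : X →ₗ[ℂ] X))
    (hd : Disjoint (LinearMap.range (S : X →ₗ[ℂ] X)) V')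
    (hcd : LinearMap.range (S : X →ₗ[ℂ] X) ⊔ V' = ⊤)
    (hker : Disjoint (LinearMap.ker (S : X →ₗ[ℂ] X)) M) :
    IsClosed (LinearMap.range (S : X →ₗ[ℂ] X) : Set X) := by
  haveI := hV'
  haveI : CompleteSpace M := hMc.completeSpace_coe
  haveI : CompleteSpace V' := FiniteDimensional.complete ℂ V'
  set ψ : (M × V') →L[ℂ] X := (S.comp M.subtypeL).coprod V'.subtypeL with hψ
  have hψap : ∀ (m : M) (v : V'), ψ (m, v) = S (m : X) + (v : X) := fun m v => rfl
  have hkerψ : LinearMap.ker (ψ : (M × V') →ₗ[ℂ] X) = ⊥ := by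
    rw [LinearMap.ker_eq_bot']
    rintro ⟨m, v⟩ hmv
    have h1 : S (m : X) + (v : X) = 0 := hmv
    have h2 : S (m : X) = -(v : X) := by rw [eq_neg_iff_add_eq_zero]; exact h1
    have hm0 : S (m : X) = 0 :=
      Submodule.disjoint_def.mp hd _ (LinearMap.mem_range_self _ _) (h2 ▸ V'.neg_mem v.2)
    have hv0 : (v : X) = 0 := by
      have : -(v : X) = 0 := h2 ▸ hm0
      simpa using this
    have hmm : (m : X) = 0 := Submodule.disjoint_def.mp hker _ hm0 m.2
    simp only [Prod.ext_iff]
    exact ⟨Subtype.ext hmm, Subtype.ext hv0⟩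
  have hranψ : LinearMap.range (ψ : (M × V') →ₗ[ℂ] X) = ⊤ := by
    rw [eq_top_iff]
    rintro x -
    have hx : x ∈ LinearMap.range (S : X →ₗ[ℂ] X) ⊔ V' := hcd ▸ Submodule.mem_top
    obtain ⟨y, hy, v, hv, rfl⟩ := Submodule.mem_sup.mp hx
    rw [← hmap] at hy
    obtain ⟨m, hm, rfl⟩ := hy
    exact ⟨(⟨m, hm⟩, ⟨v, hv⟩), rfl⟩
  set e := ContinuousLinearEquiv.ofBijective ψ hkerψ hranψ with he
  have heap : ∀ (m : M) (v : V'), e (m, v) = S (m : X) + (v : X) := fun m v => rfl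
  have hset : (LinearMap.range (S : X →ₗ[ℂ] X) : Set X) =
      e '' (((⊤ : Submodule ℂ M).prod (⊥ : Submodule ℂ V') : Submodule ℂ (M × V')) : Set (M × V')) := by
    ext x
    constructor
    · intro hx
      obtain ⟨m, hm, rfl⟩ := hmap ▸ hx
      refine ⟨(⟨m, hm⟩, 0), by simp [Submodule.mem_prod], ?_⟩
      rw [heap]; simp
    · rintro ⟨⟨m, v⟩, hmem, rfl⟩
      have hv : v = 0 := by simpa [Submodule.mem_prod] using hmem
      rw [heap, hv]
      simp
  rw [hset]
  refine e.toHomeomorph.isClosedMap _ ?_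
  have : (((⊤ : Submodule ℂ M).prod (⊥ : Submodule ℂ V') : Submodule ℂ (M × V')) : Set (M × V'))
      = (Set.univ : Set M) ×ˢ ({0} : Set V') := by
    ext ⟨m, v⟩; simp [Submodule.mem_prod]
  rw [this]
  exact isClosed_univ.prod isClosed_singleton

lemma isWeylOp_one_add (G : X →L[ℂ] X) (hG : FiniteDimensional ℂ (LinearMap.range (G : X →ₗ[ℂ] X))) :
    IsWeylOp (1 + G) := by
  haveI := hG
  set S : X →L[ℂ] X := 1 + G with hS
  set V : Submodule ℂ X := LinearMap.range (G : X →ₗ[ℂ] X) with hV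
  have hSap : ∀ x, S x = x + G x := fun x => rfl
  have hkerV : LinearMap.ker (S : X →ₗ[ℂ] X) ≤ V := by
    intro x hx
    have h1 : x + G x = 0 := hx
    have h2 : x = -(G x) := eq_neg_of_add_eq_zero_left h1
    exact h2 ▸ V.neg_mem (LinearMap.mem_range_self _ x)
  haveI hkfd : FiniteDimensional ℂ (LinearMap.ker (S : X →ₗ[ℂ] X)) := Submodule.finiteDimensional_of_le hkerV
  have hsup : LinearMap.range (S : X →ₗ[ℂ] X) ⊔ V = ⊤ := by
    rw [eq_top_iff]; rintro x -
    refine Submodule.mem_sup.mpr ⟨S x, LinearMap.mem_range_self _ x,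
      -(G x), V.neg_mem (LinearMap.mem_range_self _ x), ?_⟩
    rw [hSap]; abel
  obtain ⟨M, hMc, hMcompl⟩ :=
    (Submodule.ClosedComplemented.of_finiteDimensional (LinearMap.ker (S : X →ₗ[ℂ] X))).exists_isClosed_isCompl
  have hmap : M.map (S : X →ₗ[ℂ] X) = LinearMap.range (S : X →ₗ[ℂ] X) := by
    have hker0 : (LinearMap.ker (S : X →ₗ[ℂ] X)).map (S : X →ₗ[ℂ] X) = ⊥ := by
      rw [Submodule.eq_bot_iff]
      rintro y ⟨x, hx, rfl⟩
      exact hx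
    have := congrArg (Submodule.map (S : X →ₗ[ℂ] X)) (codisjoint_iff.mp hMcompl.codisjoint)
    rwa [Submodule.map_sup, Submodule.map_top, hker0, bot_sup_eq] at this
  obtain ⟨V', hV'le, hV'compl⟩ := exists_isCompl_le hsup
  haveI : FiniteDimensional ℂ V' := Submodule.finiteDimensional_of_le hV'le
  have hclosed : IsClosed (LinearMap.range (S : X →ₗ[ℂ] X) : Set X) :=
    isClosed_range_aux S M V' hMc inferInstance hmap hV'compl.disjoint
      (codisjoint_iff.mp hV'compl.codisjoint) hMcompl.disjoint
  -- quotient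
  set φ : V →ₗ[ℂ] (X ⧸ LinearMap.range (S : X →ₗ[ℂ] X)) := (LinearMap.range (S : X →ₗ[ℂ] X)).mkQ.comp V.subtype with hφ
  have hφsurj : Function.Surjective φ := by
    intro xq
    obtain ⟨x, rfl⟩ := (LinearMap.range (S : X →ₗ[ℂ] X)).mkQ_surjective xq
    have hx : x ∈ LinearMap.range (S : X →ₗ[ℂ] X) ⊔ V := hsup ▸ Submodule.mem_top
    obtain ⟨r, hr, v, hv, rfl⟩ := Submodule.mem_sup.mp hx
    refine ⟨⟨v, hv⟩, ?_⟩
    show (LinearMap.range (S : X →ₗ[ℂ] X)).mkQ v = (LinearMap.range (S : X →ₗ[ℂ] X)).mkQ (r + v)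
    rw [Submodule.mkQ_apply, Submodule.mkQ_apply]
    refine (Submodule.Quotient.eq _).mpr ?_
    have : v - (r + v) = -r := by abel
    rw [this]
    exact (LinearMap.range (S : X →ₗ[ℂ] X)).neg_mem hr
  haveI hqfd : FiniteDimensional ℂ (X ⧸ LinearMap.range (S : X →ₗ[ℂ] X)) :=
    Module.Finite.of_surjective φ hφsurj
  -- index computation
  have hSV : ∀ x ∈ (V : Submodule ℂ X), S x ∈ V := by
    intro x hx
    rw [hSap]
    exact V.add_mem hx (LinearMap.mem_range_self _ x)
  set σ : V →ₗ[ℂ] V := (S : X →ₗ[ℂ] X).restrict hSV with hσ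
  have h1 : Module.finrank ℂ (LinearMap.range φ) + Module.finrank ℂ (LinearMap.ker φ)
      = Module.finrank ℂ V := LinearMap.finrank_range_add_finrank_ker φ
  have h2 : Module.finrank ℂ (LinearMap.range σ) + Module.finrank ℂ (LinearMap.ker σ)
      = Module.finrank ℂ V := LinearMap.finrank_range_add_finrank_ker σ
  have hrφ : LinearMap.range φ = ⊤ := LinearMap.range_eq_top.mpr hφsurj
  have h3 : Module.finrank ℂ (LinearMap.range φ) = Module.finrank ℂ (X ⧸ LinearMap.range (S : X →ₗ[ℂ] X)) := by
    rw [hrφ]; exact finrank_top ℂ _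
  have hkerσ : Module.finrank ℂ (LinearMap.ker σ) = Module.finrank ℂ (LinearMap.ker (S : X →ₗ[ℂ] X)) := by
    have : LinearMap.ker σ = (LinearMap.ker (S : X →ₗ[ℂ] X)).comap V.subtype := by
      ext x
      simp only [LinearMap.mem_ker, Submodule.mem_comap, hσ]
      constructor
      · intro h; exact congrArg Subtype.val h
      · intro h; exact Subtype.ext h
    rw [this]
    exact (Submodule.comapSubtypeEquivOfLe hkerV).finrank_eq
  -- W := map S V
  have hWle : V.map (S : X →ₗ[ℂ] X) ≤ V := by
    rintro y ⟨x, hx, rfl⟩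
    exact hSV x hx
  have hWeq : (LinearMap.range σ).map V.subtype = V.map (S : X →ₗ[ℂ] X) := by
    ext y
    constructor
    · rintro ⟨v, ⟨u, hu⟩, rfl⟩
      exact ⟨(u : X), u.2, by rw [← hu]; rfl⟩
    · rintro ⟨x, hx, rfl⟩
      exact ⟨σ ⟨x, hx⟩, ⟨⟨x, hx⟩, rfl⟩, rfl⟩
  have hkerφeq : LinearMap.ker φ = (V.map (S : X →ₗ[ℂ] X)).comap V.subtype := by
    ext ⟨x, hx⟩
    simp only [LinearMap.mem_ker, Submodule.mem_comap, hφ, LinearMap.comp_apply,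
      Submodule.subtype_apply, Submodule.mkQ_apply]
    rw [Submodule.Quotient.mk_eq_zero]
    constructor
    · rintro ⟨y, rfl⟩
      have hy : y ∈ V := by
        have : y = S y - G y := by rw [hSap]; abel
        rw [this]
        exact V.sub_mem hx (LinearMap.mem_range_self _ y)
      exact ⟨y, hy, rfl⟩
    · rintro ⟨y, hy, rfl⟩
      exact ⟨y, rfl⟩
  have h4 : Module.finrank ℂ (LinearMap.ker φ) = Module.finrank ℂ (LinearMap.range σ) := by
    rw [hkerφeq]
    rw [(Submodule.comapSubtypeEquivOfLe hWle).finrank_eq, ← hWeq]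
    exact Submodule.finrank_map_subtype_eq V (LinearMap.range σ)
  refine ⟨hclosed, hkfd, hqfd, ?_⟩
  omega

lemma isWeylOp_unit_add_finiteRank {R F : X →L[ℂ] X} (hR : IsUnit R)
    (hF : FiniteDimensional ℂ (LinearMap.range (F : X →ₗ[ℂ] X))) : IsWeylOp (R + F) := by
  obtain ⟨u, rfl⟩ := hR
  have hdecomp : (u : X →L[ℂ] X) + F = (u : X →L[ℂ] X) * (1 + (↑u⁻¹ : X →L[ℂ] X) * F) := by
    rw [mul_add, mul_one, ← mul_assoc]
    simp
  rw [hdecomp, isWeylOp_unit_mul u.isUnit]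
  refine isWeylOp_one_add _ ?_
  haveI := hF
  have hle : LinearMap.range (((↑u⁻¹ : X →L[ℂ] X) * F : X →L[ℂ] X) : X →ₗ[ℂ] X)
      ≤ (LinearMap.range (F : X →ₗ[ℂ] X)).map ((↑u⁻¹ : X →L[ℂ] X) : X →ₗ[ℂ] X) := by
    rintro y ⟨x, rfl⟩
    exact ⟨F x, LinearMap.mem_range_self _ x, rfl⟩
  haveI : FiniteDimensional ℂ ((LinearMap.range (F : X →ₗ[ℂ] X)).map ((↑u⁻¹ : X →L[ℂ] X) : X →ₗ[ℂ] X)) :=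
    Module.Finite.map _ _
  exact Submodule.finiteDimensional_of_le hle

lemma isWeylOp_decomp {S : X →L[ℂ] X} (hS : IsWeylOp S) :
    ∃ R F : X →L[ℂ] X, IsUnit R ∧ FiniteDimensional ℂ (LinearMap.range (F : X →ₗ[ℂ] X)) ∧ S = R + F := by
  obtain ⟨hcl, hk, hq, hfr⟩ := hS
  haveI := hk; haveI := hq
  obtain ⟨M, hMc, hMcompl⟩ :=
    (Submodule.ClosedComplemented.of_finiteDimensional (LinearMap.ker (S : X →ₗ[ℂ] X))).exists_isClosed_isCompl
  obtain ⟨N, hN⟩ := Submodule.exists_isCompl (LinearMap.range (S : X →ₗ[ℂ] X))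
  haveI hNfd : FiniteDimensional ℂ N :=
    (Submodule.quotientEquivOfIsCompl (LinearMap.range (S : X →ₗ[ℂ] X)) N hN).finiteDimensional
  have hfrN : Module.finrank ℂ (LinearMap.ker (S : X →ₗ[ℂ] X)) = Module.finrank ℂ N := by
    rw [hfr]
    exact (Submodule.quotientEquivOfIsCompl (LinearMap.range (S : X →ₗ[ℂ] X)) N hN).finrank_eq
  obtain ⟨J⟩ := FiniteDimensional.nonempty_linearEquiv_of_finrank_eq hfrN
  set Jc : (LinearMap.ker (S : X →ₗ[ℂ] X)) →L[ℂ] X :=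
    N.subtypeL.comp (LinearMap.toContinuousLinearMap (J : (LinearMap.ker (S : X →ₗ[ℂ] X)) →ₗ[ℂ] N)) with hJc
  haveI : CompleteSpace M := hMc.completeSpace_coe
  haveI : CompleteSpace (LinearMap.ker (S : X →ₗ[ℂ] X)) := FiniteDimensional.complete ℂ _
  set ψ : (M × (LinearMap.ker (S : X →ₗ[ℂ] X))) →L[ℂ] X := (S.comp M.subtypeL).coprod Jc with hψ
  have hψap : ∀ (m : M) (k : LinearMap.ker (S : X →ₗ[ℂ] X)), ψ (m, k) = S (m : X) + (J k : X) := fun m k => rfl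
  have hkerψ : LinearMap.ker (ψ : (M × (LinearMap.ker (S : X →ₗ[ℂ] X))) →ₗ[ℂ] X) = ⊥ := by
    rw [LinearMap.ker_eq_bot']
    rintro ⟨m, k⟩ hmk
    have h1 : S (m : X) + (J k : X) = 0 := hmk
    have h2 : S (m : X) = -(J k : X) := eq_neg_of_add_eq_zero_left h1
    have hm0 : S (m : X) = 0 :=
      Submodule.disjoint_def.mp hN.disjoint _ (LinearMap.mem_range_self _ _)
        (h2 ▸ N.neg_mem (J k).2)
    have hJk : (J k : X) = 0 := by
      have : -(J k : X) = 0 := h2 ▸ hm0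
      simpa using this
    have hk0 : k = 0 := by
      have : J k = 0 := Subtype.ext hJk
      simpa using (map_eq_zero_iff J J.injective).mp this
    have hm : (m : X) = 0 := Submodule.disjoint_def.mp hMcompl.disjoint _ hm0 m.2
    simp only [Prod.ext_iff]
    exact ⟨Subtype.ext hm, hk0⟩
  have hranψ : LinearMap.range (ψ : (M × (LinearMap.ker (S : X →ₗ[ℂ] X))) →ₗ[ℂ] X) = ⊤ := by
    rw [eq_top_iff]
    rintro x -
    have hx : x ∈ LinearMap.range (S : X →ₗ[ℂ] X) ⊔ N := codisjoint_iff.mp hN.codisjoint ▸ Submodule.mem_top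
    obtain ⟨r, hr, n, hn, rfl⟩ := Submodule.mem_sup.mp hx
    obtain ⟨y, rfl⟩ := hr
    have hy : y ∈ (LinearMap.ker (S : X →ₗ[ℂ] X)) ⊔ M := codisjoint_iff.mp hMcompl.codisjoint ▸ Submodule.mem_top
    obtain ⟨k, hkk, m, hm, rfl⟩ := Submodule.mem_sup.mp hy
    refine ⟨(⟨m, hm⟩, J.symm ⟨n, hn⟩), ?_⟩
    rw [ContinuousLinearMap.coe_coe, hψap]
    have hSk : S k = 0 := hkk
    simp only [ContinuousLinearMap.coe_coe, map_add, hSk, zero_add, LinearEquiv.apply_symm_apply]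
  set eψ := ContinuousLinearEquiv.ofBijective ψ hkerψ hranψ with heψ
  set eX : X ≃L[ℂ] (M × (LinearMap.ker (S : X →ₗ[ℂ] X))) :=
    (Submodule.prodEquivOfClosedCompl M (LinearMap.ker (S : X →ₗ[ℂ] X)) hMcompl.symm hMc
      (Submodule.closed_of_finiteDimensional _)).symm with heX
  set R : X →L[ℂ] X := ψ.comp (eX : X →L[ℂ] (M × (LinearMap.ker (S : X →ₗ[ℂ] X)))) with hR
  have hRunit : IsUnit R := by
    rw [ContinuousLinearMap.isUnit_iff_bijective]
    have : (R : X → X) = (eψ : (M × LinearMap.ker (S : X →ₗ[ℂ] X)) → X) ∘ (eX : X → (M × LinearMap.ker (S : X →ₗ[ℂ] X))) := rfl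
    rw [this]
    exact eψ.bijective.comp eX.bijective
  refine ⟨R, S - R, hRunit, ?_, by abel⟩
  have hle : LinearMap.range ((S - R : X →L[ℂ] X) : X →ₗ[ℂ] X) ≤ N := by
    rintro y ⟨x, rfl⟩
    have hxdec : ((eX x).1 : X) + ((eX x).2 : X) = x := by
      have := (Submodule.prodEquivOfClosedCompl M (LinearMap.ker (S : X →ₗ[ℂ] X)) hMcompl.symm hMc
        (Submodule.closed_of_finiteDimensional _)).apply_symm_apply x
      exact this
    have hRx : R x = S ((eX x).1 : X) + (J (eX x).2 : X) := rfl
    have hSx : S x = S ((eX x).1 : X) := by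
      conv_lhs => rw [← hxdec]
      rw [map_add]
      have : S ((eX x).2 : X) = 0 := (eX x).2.2
      rw [this, add_zero]
    have : (S - R) x = -(J (eX x).2 : X) := by
      simp only [ContinuousLinearMap.sub_apply, hRx, hSx]
      abel
    rw [ContinuousLinearMap.coe_coe, this]
    exact N.neg_mem (J (eX x).2).2
  exact Submodule.finiteDimensional_of_le hle

lemma isOpen_weylSet : IsOpen {S : X →L[ℂ] X | IsWeylOp S} := by
  rw [isOpen_iff_mem_nhds]
  intro S₀ hS₀
  obtain ⟨R, F, hR, hF, rfl⟩ := isWeylOp_decomp hS₀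
  have hopen : IsOpen {S : X →L[ℂ] X | IsUnit (S - F)} :=
    Units.isOpen.preimage (continuous_id.sub continuous_const)
  have hmem : R + F ∈ {S : X →L[ℂ] X | IsUnit (S - F)} := by
    simp only [Set.mem_setOf_eq, add_sub_cancel_right]
    exact hR
  refine Filter.mem_of_superset (hopen.mem_nhds hmem) ?_
  intro S hS
  have : S = (S - F) + F := by abel
  rw [Set.mem_setOf_eq, this]
  exact isWeylOp_unit_add_finiteRank hS hF

open Complex in
lemma exists_zpow_near {γ μ : ℂ} (hγ : ‖γ‖ = 1) (hroot : ∀ n : ℕ, 1 ≤ n → γ ^ n ≠ 1)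
    (hμ : ‖μ‖ = 1) {ε : ℝ} (hε : 0 < ε) : ∃ n : ℤ, ‖γ ^ n - μ‖ < ε := by
  have habsγ : ‖γ‖ = 1 := hγ
  have habsμ : ‖μ‖ = 1 := hμ
  set θ := Complex.arg γ with hθ
  set φ := Complex.arg μ with hφ
  have hγexp : Complex.exp (θ * Complex.I) = γ := by
    have := Complex.norm_mul_exp_arg_mul_I γ
    rwa [habsγ, Complex.ofReal_one, one_mul] at this
  have hμexp : Complex.exp (φ * Complex.I) = μ := by
    have := Complex.norm_mul_exp_arg_mul_I μ
    rwa [habsμ, Complex.ofReal_one, one_mul] at this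
  have key : ∀ a b : ℝ, |a - b| ≤ 1 →
      ‖Complex.exp (a * Complex.I) - Complex.exp (b * Complex.I)‖ ≤ 2 * |a - b| := by
    intro a b hab
    have h1 : Complex.exp ((a:ℂ) * Complex.I) - Complex.exp ((b:ℂ) * Complex.I)
        = Complex.exp ((b:ℂ) * Complex.I) * (Complex.exp (((a - b : ℝ) : ℂ) * Complex.I) - 1) := by
      rw [mul_sub, ← Complex.exp_add, mul_one]
      push_cast
      ring_nf
    rw [h1, norm_mul]
    have h2 : ‖Complex.exp ((b:ℂ) * Complex.I)‖ = 1 := Complex.norm_exp_ofReal_mul_I b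
    rw [h2, one_mul]
    have h3 : ‖((a - b : ℝ) : ℂ) * Complex.I‖ = |a - b| := by
      rw [norm_mul, Complex.norm_I, mul_one, Complex.norm_real, Real.norm_eq_abs]
    have h4 := Complex.norm_exp_sub_one_le (x := ((a - b : ℝ) : ℂ) * Complex.I) (by rw [h3]; exact hab)
    rw [h3] at h4
    exact h4
  set G := AddSubgroup.zmultiples θ ⊔ AddSubgroup.zmultiples (2 * Real.pi) with hG
  rcases AddSubgroup.dense_or_cyclic G with hdense | ⟨a, ha⟩
  · set ε' := min (ε / 2) 1 with hε'
    have hε'pos : 0 < ε' := lt_min (by linarith) one_pos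
    obtain ⟨g, hgG, hgφ⟩ := hdense.exists_dist_lt φ hε'pos
    rw [dist_comm, Real.dist_eq] at hgφ
    obtain ⟨y, hy, z, hz, rfl⟩ := AddSubgroup.mem_sup.mp hgG
    obtain ⟨m, rfl⟩ := AddSubgroup.mem_zmultiples_iff.mp hy
    obtain ⟨k, rfl⟩ := AddSubgroup.mem_zmultiples_iff.mp hz
    refine ⟨m, ?_⟩
    have hzpow : γ ^ m = Complex.exp (((m • θ + k • (2 * Real.pi) : ℝ) : ℂ) * Complex.I) := by
      rw [← hγexp, ← Complex.exp_int_mul]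
      have h2k : Complex.exp (((k • (2 * Real.pi) : ℝ) : ℂ) * Complex.I) = 1 := by
        have := Complex.exp_int_mul_two_pi_mul_I k
        rw [← this]
        congr 1
        push_cast [zsmul_eq_mul]
        ring
      rw [Complex.ofReal_add, add_mul, Complex.exp_add, h2k, mul_one]
      congr 1
      push_cast [zsmul_eq_mul]
      ring
    rw [hzpow, ← hμexp]
    calc ‖Complex.exp (((m • θ + k • (2 * Real.pi) : ℝ) : ℂ) * Complex.I)
        - Complex.exp ((φ : ℂ) * Complex.I)‖
        ≤ 2 * |m • θ + k • (2 * Real.pi) - φ| :=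
          key _ _ (le_of_lt (lt_of_lt_of_le hgφ (min_le_right _ _)))
      _ < 2 * ε' := by
          have := hgφ
          nlinarith [abs_nonneg (m • θ + k • (2 * Real.pi) - φ)]
      _ ≤ ε := by
          have := min_le_left (ε / 2) 1
          calc 2 * ε' ≤ 2 * (ε / 2) := by nlinarith
            _ = ε := by ring
  · exfalso
    rw [← AddSubgroup.zmultiples_eq_closure] at ha
    have hθG : θ ∈ G := le_sup_left (α := AddSubgroup ℝ) (AddSubgroup.mem_zmultiples θ)
    have hπG : (2 * Real.pi) ∈ G := le_sup_right (α := AddSubgroup ℝ)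
      (AddSubgroup.mem_zmultiples (2 * Real.pi))
    rw [ha] at hθG hπG
    obtain ⟨m, hm⟩ := AddSubgroup.mem_zmultiples_iff.mp hθG
    obtain ⟨k, hk⟩ := AddSubgroup.mem_zmultiples_iff.mp hπG
    have hk0 : k ≠ 0 := by
      rintro rfl
      rw [zero_zsmul] at hk
      have := Real.two_pi_pos
      linarith
    have hγk : γ ^ k = 1 := by
      rw [← hγexp, ← Complex.exp_int_mul, ← hm]
      have : ((k : ℂ)) * (((m • a : ℝ) : ℂ) * Complex.I) = ((m : ℂ)) * (((k • a : ℝ) : ℂ) * Complex.I) := by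
        push_cast [zsmul_eq_mul]
        ring
      rw [this, hk]
      have : ((m : ℂ)) * (((2 * Real.pi : ℝ) : ℂ) * Complex.I) = ((m : ℂ)) * (2 * Real.pi * Complex.I) := by
        push_cast; ring
      rw [this]
      exact Complex.exp_int_mul_two_pi_mul_I m
    have hnat : γ ^ (k.natAbs : ℕ) = 1 := by
      rcases Int.natAbs_eq k with h | h
      · rw [← zpow_natCast, ← h, hγk]
      · rw [← zpow_natCast, ← neg_neg (k.natAbs : ℤ), ← h, zpow_neg, hγk, inv_one]
    exact hroot k.natAbs (Nat.one_le_iff_ne_zero.mpr (Int.natAbs_ne_zero.mpr hk0)) hnat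


end Lemmas

theorem statement_4 {X : Type*} [NormedAddCommGroup X] [NormedSpace ℂ X] [CompleteSpace X]
    (U V A B w T : X →L[ℂ] X) (γ : ℂ)
    (hUV : U * V = 1) (hVU : V * U = 1) (hγ : ‖γ‖ = 1)
    (hroot : ∀ n : ℕ, 1 ≤ n → γ ^ n ≠ 1)
    (hAB : A * B = 1) (hBA : B * A = 1)
    (hA : U * A * V = γ • A)
    (hwA : w * A = A * w)
    (hT : T = w * U) :
    ∀ l ∈ sigma4 T, ∀ μ : ℂ, ‖μ‖ = 1 → μ * l ∈ sigma4 T := by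
  intro l hl μ hμ
  by_cases hl0 : l = 0
  · rw [hl0, mul_zero]; rwa [hl0] at hl
  have hγ0 : γ ≠ 0 := by
    intro h; rw [h] at hγ; simp at hγ
  have hAunit : IsUnit A := ⟨⟨A, B, hAB, hBA⟩, rfl⟩
  have hBunit : IsUnit B := ⟨⟨B, A, hBA, hAB⟩, rfl⟩
  have hUA : U * A = γ • (A * U) := by
    calc U * A = U * A * (V * U) := by rw [hVU, mul_one]
      _ = (U * A * V) * U := by rw [mul_assoc, mul_assoc, mul_assoc]
      _ = (γ • A) * U := by rw [hA]
      _ = γ • (A * U) := smul_mul_assoc γ A U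
  have hAU : A * U = γ⁻¹ • (U * A) := by
    rw [hUA, smul_smul, inv_mul_cancel₀ hγ0, one_smul]
  have hBw : B * w = w * B := by
    have h1 : B * (w * A) * B = B * (A * w) * B := by rw [hwA]
    calc B * w = B * w * (A * B) := by rw [hAB, mul_one]
      _ = B * (w * A) * B := by rw [← mul_assoc, mul_assoc B w A]
      _ = B * (A * w) * B := h1
      _ = (B * A) * (w * B) := by noncomm_ring
      _ = w * B := by rw [hBA, one_mul]
  have hsim1 : A * T * B = γ⁻¹ • T := by
    calc A * T * B = A * (w * U) * B := by rw [hT]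
      _ = (A * w) * (U * B) := by rw [← mul_assoc, mul_assoc (A*w) U B]
      _ = (w * A) * (U * B) := by rw [← hwA]
      _ = w * (A * U) * B := by rw [mul_assoc w A (U*B), ← mul_assoc A U B, ← mul_assoc]
      _ = w * (γ⁻¹ • (U * A)) * B := by rw [hAU]
      _ = γ⁻¹ • (w * (U * A) * B) := by rw [mul_smul_comm, smul_mul_assoc]
      _ = γ⁻¹ • (w * U * (A * B)) := by congr 1
      _ = γ⁻¹ • T := by rw [hAB, mul_one, hT]
  have hsim2 : B * T * A = γ • T := by
    calc B * T * A = B * (w * U) * A := by rw [hT]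
      _ = (B * w) * (U * A) := by rw [← mul_assoc, mul_assoc (B*w) U A]
      _ = (w * B) * (γ • (A * U)) := by rw [hBw, hUA]
      _ = γ • ((w * B) * (A * U)) := mul_smul_comm γ _ _
      _ = γ • (w * (B * A) * U) := by congr 1
      _ = γ • T := by rw [hBA, mul_one, hT]
  have hstep1 : ∀ c : ℂ, c ∈ sigma4 T → γ * c ∈ sigma4 T := by
    intro c hc hW
    apply hc
    have hcomp : B * ((γ * c) • (1 : X →L[ℂ] X) - T) * A = γ • (c • 1 - T) := by
      rw [mul_sub, sub_mul, mul_smul_comm, smul_mul_assoc, mul_one, hBA, hsim2,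
        smul_sub, smul_smul, mul_comm γ c, mul_comm c γ]
    have h1 : IsWeylOp (B * ((γ * c) • (1 : X →L[ℂ] X) - T) * A) := by
      rw [mul_assoc]
      rw [isWeylOp_unit_mul hBunit, isWeylOp_mul_unit hAunit]
      exact hW
    rw [hcomp] at h1
    exact (isWeylOp_smul hγ0 _).mp h1
  have hstep2 : ∀ c : ℂ, c ∈ sigma4 T → γ⁻¹ * c ∈ sigma4 T := by
    intro c hc hW
    apply hc
    have hγ0' : γ⁻¹ ≠ 0 := inv_ne_zero hγ0
    have hcomp : A * ((γ⁻¹ * c) • (1 : X →L[ℂ] X) - T) * B = γ⁻¹ • (c • 1 - T) := by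
      rw [mul_sub, sub_mul, mul_smul_comm, smul_mul_assoc, mul_one, hAB, hsim1,
        smul_sub, smul_smul, mul_comm γ⁻¹ c, mul_comm c γ⁻¹]
    have h1 : IsWeylOp (A * ((γ⁻¹ * c) • (1 : X →L[ℂ] X) - T) * B) := by
      rw [mul_assoc]
      rw [isWeylOp_unit_mul hAunit, isWeylOp_mul_unit hBunit]
      exact hW
    rw [hcomp] at h1
    exact (isWeylOp_smul hγ0' _).mp h1
  have hall : ∀ n : ℤ, γ ^ n * l ∈ sigma4 T := by
    intro n
    induction n using Int.induction_on with
    | zero => simpa using hl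
    | succ n ih =>
        have h := hstep1 _ ih
        have heq : γ ^ ((n : ℤ) + 1) * l = γ * (γ ^ (n : ℤ) * l) := by
          rw [zpow_add_one₀ hγ0]; ring
        rwa [heq]
    | pred n ih =>
        have h := hstep2 _ ih
        have heq : γ ^ (-(n : ℤ) - 1) * l = γ⁻¹ * (γ ^ (-(n : ℤ)) * l) := by
          rw [zpow_sub_one₀ hγ0]; ring
        rwa [heq]
  by_contra hcon
  have hW : IsWeylOp ((μ * l) • (1 : X →L[ℂ] X) - T) := not_not.mp hcon
  have hOopen : IsOpen {c : ℂ | IsWeylOp (c • (1 : X →L[ℂ] X) - T)} := by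
    have hcont : Continuous (fun c : ℂ => c • (1 : X →L[ℂ] X) - T) :=
      (continuous_id.smul continuous_const).sub continuous_const
    exact isOpen_weylSet.preimage hcont
  obtain ⟨ε, hεpos, hball⟩ := Metric.isOpen_iff.mp hOopen (μ * l) hW
  have hlnorm : (0 : ℝ) < ‖l‖ := norm_pos_iff.mpr hl0
  obtain ⟨n, hn⟩ := exists_zpow_near hγ hroot hμ (ε := ε / ‖l‖) (div_pos hεpos hlnorm)
  have hdist : dist (γ ^ n * l) (μ * l) < ε := by
    rw [dist_eq_norm]
    have : γ ^ n * l - μ * l = (γ ^ n - μ) * l := by ring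
    rw [this, norm_mul]
    calc ‖γ ^ n - μ‖ * ‖l‖ < (ε / ‖l‖) * ‖l‖ := by
          exact mul_lt_mul_of_pos_right hn hlnorm
      _ = ε := div_mul_cancel₀ ε (ne_of_gt hlnorm)
  have hmem : γ ^ n * l ∈ {c : ℂ | IsWeylOp (c • (1 : X →L[ℂ] X) - T)} :=
    hball (Metric.mem_ball.mpr hdist)
  exact hall n hmem
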